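/- (Revelation principle, Lemma 2.1.) Under the stated assumptions: (i) the incentive-compatible feasible set is nonempty, and moreover there exist a coordination mechanism π̂ satisfying all the incentive-compatibility constraints and a real δ > 0 such that every π with ⟨π_θ, 𝟙⟩ = 1 for every θ and ‖π − π̂‖₂ ≤ δ (Euclidean norm over all |Θ|·|𝒳| entries) is again a coordination mechanism satisfying all the incentive-compatibility constraints; and (ii) u_LP = u*. -/

import Mathlib

open Finset

lemma cs_sqrt {ι : Type*} [Fintype ι] (f g : ι → ℝ) :
    ∑ i, f i * g i ≤ Real.sqrt (∑ i, f i ^ 2) * Real.sqrt (∑ i, g i ^ 2) := by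
  have h := Finset.sum_mul_sq_le_sq_mul_sq Finset.univ f g
  calc ∑ i, f i * g i ≤ |∑ i, f i * g i| := le_abs_self _
    _ = Real.sqrt ((∑ i, f i * g i) ^ 2) := (Real.sqrt_sq_eq_abs _).symm
    _ ≤ Real.sqrt ((∑ i, f i ^ 2) * ∑ i, g i ^ 2) := Real.sqrt_le_sqrt h
    _ = _ := Real.sqrt_mul (Finset.sum_nonneg fun i _ => sq_nonneg _) _

lemma mink_sqrt {ι : Type*} [Fintype ι] (f g : ι → ℝ) :
    Real.sqrt (∑ i, (f i + g i) ^ 2) ≤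
      Real.sqrt (∑ i, f i ^ 2) + Real.sqrt (∑ i, g i ^ 2) := by
  set A := Real.sqrt (∑ i, f i ^ 2) with hA
  set B := Real.sqrt (∑ i, g i ^ 2) with hB
  have hA0 : 0 ≤ A := Real.sqrt_nonneg _
  have hB0 : 0 ≤ B := Real.sqrt_nonneg _
  have hA2 : A ^ 2 = ∑ i, f i ^ 2 := Real.sq_sqrt (Finset.sum_nonneg fun i _ => sq_nonneg _)
  have hB2 : B ^ 2 = ∑ i, g i ^ 2 := Real.sq_sqrt (Finset.sum_nonneg fun i _ => sq_nonneg _)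
  have hcs : ∑ i, f i * g i ≤ A * B := cs_sqrt f g
  have key : ∑ i, (f i + g i) ^ 2 ≤ (A + B) ^ 2 := by
    have : ∑ i, (f i + g i) ^ 2 = (∑ i, f i ^ 2) + 2 * (∑ i, f i * g i) + ∑ i, g i ^ 2 := by
      rw [Finset.mul_sum, ← Finset.sum_add_distrib, ← Finset.sum_add_distrib]
      exact Finset.sum_congr rfl fun i _ => by ring
    rw [this, ← hA2, ← hB2]; nlinarith
  calc Real.sqrt (∑ i, (f i + g i) ^ 2) ≤ Real.sqrt ((A + B) ^ 2) := Real.sqrt_le_sqrt key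
    _ = A + B := by rw [Real.sqrt_sq (by linarith)]

/-- Lemma 2.1 (Revelation principle).  `Θ` is the type space, `𝒳` the principal's action
space, `f` the type distribution, `u`/`v` the principal's/agent's expected reward vectors.
Under the non-degeneracy assumption on the agent's rewards and the interior-point
assumption, (i) the incentive-compatible feasible set is nonempty and contains a mechanism
`π̂` together with a whole `δ`-neighbourhood (within the affine slice of row-sums one) of
incentive-compatible coordination mechanisms, and (ii) the LP value equals the OPT value. -/
theorem revelation_principle
    {Θ 𝒳 : Type*} [Fintype Θ] [Fintype 𝒳] [Nonempty Θ] [Nonempty 𝒳]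
    (f : Θ → ℝ) (u v : Θ → 𝒳 → ℝ)
    (hf0 : ∀ θ, 0 ≤ f θ) (hf1 : ∑ θ, f θ = 1)
    -- non-degenerate rewards: `v θ` is not a scalar multiple of the all-ones vector
    (hnondeg : ∀ θ, ¬∃ c : ℝ, v θ = fun _ => c)
    -- the normalized reward vectors, pairwise distinct
    (vbar : Θ → 𝒳 → ℝ)
    (hvbar : ∀ θ x, vbar θ x =
      (v θ x - (∑ y, v θ y) / (Fintype.card 𝒳 : ℝ)) /
        Real.sqrt (∑ y, (v θ y - (∑ z, v θ z) / (Fintype.card 𝒳 : ℝ)) ^ 2))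
    (hdistinct : ∀ θ θ' : Θ, θ ≠ θ' → vbar θ ≠ vbar θ')
    -- interior-point assumption
    (πbar : Θ → 𝒳 → ℝ) (ε : ℝ) (hε : 0 < ε)
    (hπbar0 : ∀ θ x, 0 ≤ πbar θ x) (hπbar1 : ∀ θ, ∑ x, πbar θ x = 1)
    (hinterior : ∀ π : Θ → 𝒳 → ℝ, (∀ θ, ∑ x, π θ x = 1) →
      Real.sqrt (∑ θ, ∑ x, (π θ x - πbar θ x) ^ 2) ≤ ε → ∀ θ x, 0 ≤ π θ x) :
    -- (i) feasibility with an interior point for the IC constraints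
    (∃ (πhat : Θ → 𝒳 → ℝ) (δ : ℝ), 0 < δ ∧
      (∀ θ x, 0 ≤ πhat θ x) ∧ (∀ θ, ∑ x, πhat θ x = 1) ∧
      (∀ θ θ' : Θ, θ ≠ θ' → ∑ x, v θ x * πhat θ' x ≤ ∑ x, v θ x * πhat θ x) ∧
      ∀ π : Θ → 𝒳 → ℝ, (∀ θ, ∑ x, π θ x = 1) →
        Real.sqrt (∑ θ, ∑ x, (π θ x - πhat θ x) ^ 2) ≤ δ →
          (∀ θ x, 0 ≤ π θ x) ∧
            ∀ θ θ' : Θ, θ ≠ θ' → ∑ x, v θ x * π θ' x ≤ ∑ x, v θ x * π θ x) ∧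
    -- (ii) u_LP = u*
    sSup {s : ℝ | ∃ π : Θ → 𝒳 → ℝ,
        (∀ θ x, 0 ≤ π θ x) ∧ (∀ θ, ∑ x, π θ x = 1) ∧
        (∀ θ θ' : Θ, θ ≠ θ' → ∑ x, v θ x * π θ' x ≤ ∑ x, v θ x * π θ x) ∧
        s = ∑ θ, f θ * ∑ x, u θ x * π θ x} =
      sSup {s : ℝ | ∃ (π : Θ → 𝒳 → ℝ) (r : Θ → Θ),
        (∀ θ x, 0 ≤ π θ x) ∧ (∀ θ, ∑ x, π θ x = 1) ∧
        (∀ θ θ'' : Θ, ∑ x, v θ x * π θ'' x ≤ ∑ x, v θ x * π (r θ) x) ∧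
        s = ∑ θ, f θ * ∑ x, u θ x * π (r θ) x} := by
    classical
  constructor
  · -- Part (i)
    -- abbreviations
    set d : ℝ := (Fintype.card 𝒳 : ℝ) with hd
    have hd0 : 0 < d := by
      simp only [hd]; exact_mod_cast Fintype.card_pos
    set c : Θ → ℝ := fun θ => (∑ y, v θ y) / d with hc
    set w : Θ → 𝒳 → ℝ := fun θ x => v θ x - c θ with hw
    set S : Θ → ℝ := fun θ => ∑ y, (w θ y) ^ 2 with hS
    set N : Θ → ℝ := fun θ => Real.sqrt (S θ) with hN
    have hvbar' : ∀ θ x, vbar θ x = w θ x / N θ := by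
      intro θ x; rw [hvbar θ x]
    have hSpos : ∀ θ, 0 < S θ := by
      intro θ
      rcases (Finset.sum_nonneg (fun y (_ : y ∈ Finset.univ) => sq_nonneg (w θ y))).lt_or_eq
        with h | h
      · exact h
      · exfalso
        apply hnondeg θ
        refine ⟨c θ, funext fun x => ?_⟩
        have hx : (w θ x) ^ 2 = 0 :=
          (Finset.sum_eq_zero_iff_of_nonneg (fun y _ => sq_nonneg (w θ y))).1 h.symm x
            (Finset.mem_univ x)
        have : w θ x = 0 := by
          have := sq_eq_zero_iff.1 hx; exact this
        simpa [hw, sub_eq_zero] using this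
    have hNpos : ∀ θ, 0 < N θ := fun θ => Real.sqrt_pos.2 (hSpos θ)
    have hwN : ∀ θ x, w θ x = N θ * vbar θ x := by
      intro θ x
      rw [hvbar' θ x, mul_comm, div_mul_cancel₀ _ (hNpos θ).ne']
    have hwsum : ∀ θ, ∑ x, w θ x = 0 := by
      intro θ
      simp only [hw, Finset.sum_sub_distrib, Finset.sum_const, Finset.card_univ, nsmul_eq_mul,
        hc]
      field_simp
      rw [hd]; ring
    have hvbarsum : ∀ θ, ∑ x, vbar θ x = 0 := by
      intro θ
      have : ∑ x, vbar θ x = (∑ x, w θ x) / N θ := by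
        rw [Finset.sum_div]; exact Finset.sum_congr rfl fun x _ => hvbar' θ x
      rw [this, hwsum, zero_div]
    have hvbarnorm : ∀ θ, ∑ x, (vbar θ x) ^ 2 = 1 := by
      intro θ
      have : ∑ x, (vbar θ x) ^ 2 = (∑ x, (w θ x) ^ 2) / (N θ) ^ 2 := by
        rw [Finset.sum_div]
        exact Finset.sum_congr rfl fun x _ => by rw [hvbar' θ x, div_pow]
      rw [this, hN]
      rw [Real.sq_sqrt (hSpos θ).le]
      exact div_self (hSpos θ).ne'
    -- inner products of normalized vectors
    set ip : Θ → Θ → ℝ := fun θ θ' => ∑ x, vbar θ x * vbar θ' x with hip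
    have hiple : ∀ θ θ' : Θ, θ ≠ θ' → ip θ θ' < 1 := by
      intro θ θ' hne
      have hpos : 0 < ∑ x, (vbar θ x - vbar θ' x) ^ 2 := by
        have hne' : vbar θ ≠ vbar θ' := hdistinct θ θ' hne
        have : ∃ x, vbar θ x ≠ vbar θ' x := by
          by_contra h
          push_neg at h
          exact hne' (funext h)
        obtain ⟨x₀, hx₀⟩ := this
        refine lt_of_lt_of_le ?_ (Finset.single_le_sum (f := fun x => (vbar θ x - vbar θ' x) ^ 2)
          (fun x _ => sq_nonneg _) (Finset.mem_univ x₀))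
        have h0 : vbar θ x₀ - vbar θ' x₀ ≠ 0 := sub_ne_zero.2 hx₀
        have h1 : 0 < |vbar θ x₀ - vbar θ' x₀| ^ 2 := pow_pos (abs_pos.2 h0) 2
        rwa [sq_abs] at h1
      have hexp : ∑ x, (vbar θ x - vbar θ' x) ^ 2 = 2 - 2 * ip θ θ' := by
        have : ∀ x, (vbar θ x - vbar θ' x) ^ 2 =
            (vbar θ x) ^ 2 + (vbar θ' x) ^ 2 - 2 * (vbar θ x * vbar θ' x) := fun x => by ring
        rw [Finset.sum_congr rfl fun x _ => this x]
        rw [Finset.sum_sub_distrib, Finset.sum_add_distrib, hvbarnorm, hvbarnorm,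
          ← Finset.mul_sum]
        ring
      rw [hexp] at hpos; linarith
    have hvv : ∀ θ θ' : Θ, ∑ x, v θ x * vbar θ' x = N θ * ip θ θ' := by
      intro θ θ'
      have : ∀ x, v θ x * vbar θ' x = N θ * (vbar θ x * vbar θ' x) + c θ * vbar θ' x := by
        intro x
        have hv : v θ x = N θ * vbar θ x + c θ := by
          have := hwN θ x; simp only [hw] at this; linarith
        rw [hv]; ring
      rw [Finset.sum_congr rfl fun x _ => this x, Finset.sum_add_distrib, ← Finset.mul_sum,
        ← Finset.mul_sum, hvbarsum, mul_zero, add_zero, hip]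
    -- margin and bounds
    have hΘ0 : (0:ℝ) < (Fintype.card Θ : ℝ) := by exact_mod_cast Fintype.card_pos
    set γ : ℝ := Finset.univ.inf' Finset.univ_nonempty
      (fun p : Θ × Θ => if p.1 = p.2 then 1 else ε / 2 * (N p.1 * (1 - ip p.1 p.2))) with hγ
    have hγpos : 0 < γ := by
      rw [hγ, Finset.lt_inf'_iff]
      rintro ⟨θ, θ'⟩ -
      by_cases h : θ = θ'
      · simp [h]
      · simp only [if_neg h]
        have h1 := hiple θ θ' h
        exact mul_pos (by linarith) (mul_pos (hNpos θ) (by linarith))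
    have hγle : ∀ θ θ' : Θ, θ ≠ θ' → γ ≤ ε / 2 * (N θ * (1 - ip θ θ')) := by
      intro θ θ' h
      have h2 := Finset.inf'_le
        (fun p : Θ × Θ => if p.1 = p.2 then 1 else ε / 2 * (N p.1 * (1 - ip p.1 p.2)))
        (Finset.mem_univ (θ, θ'))
      rw [hγ]
      exact le_of_le_of_eq h2 (if_neg h)
    set M : ℝ := Finset.univ.sup' Finset.univ_nonempty
      (fun θ => Real.sqrt (∑ x, (v θ x) ^ 2)) with hM
    have hMle : ∀ θ, Real.sqrt (∑ x, (v θ x) ^ 2) ≤ M := fun θ =>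
      Finset.le_sup' (fun θ => Real.sqrt (∑ x, (v θ x) ^ 2)) (Finset.mem_univ θ)
    have hM0 : 0 ≤ M :=
      le_trans (Real.sqrt_nonneg _) (hMle (Classical.arbitrary Θ))
    set δ : ℝ := min (ε / 2) (γ / (2 * (M + 1))) with hδ
    have hδpos : 0 < δ := lt_min (by linarith) (div_pos hγpos (by linarith))
    have hδε : δ ≤ ε / 2 := min_le_left _ _
    have hδγ : δ ≤ γ / (2 * (M + 1)) := min_le_right _ _
    -- the candidate mechanism
    set m : 𝒳 → ℝ := fun x => (∑ σ, πbar σ x) / (Fintype.card Θ : ℝ) with hm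
    set πh : Θ → 𝒳 → ℝ := fun θ x => m x + ε / 2 * vbar θ x with hπh
    have hmsum : ∑ x, m x = 1 := by
      simp only [hm]
      rw [← Finset.sum_div, Finset.sum_comm]
      have hs : ∑ σ : Θ, ∑ x, πbar σ x = (Fintype.card Θ : ℝ) := by
        simp [hπbar1]
      rw [hs, div_self hΘ0.ne']
    have hπhsum : ∀ θ, ∑ x, πh θ x = 1 := by
      intro θ
      simp only [hπh]
      rw [Finset.sum_add_distrib, hmsum, ← Finset.mul_sum, hvbarsum, mul_zero, add_zero]
    -- interiority transfer
    have lemA : ∀ q : 𝒳 → ℝ, (∑ x, q x) = 0 → Real.sqrt (∑ x, q x ^ 2) ≤ ε →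
        ∀ σ x, 0 ≤ πbar σ x + q x := by
      intro q hq0 hqn σ x
      have h := hinterior (fun τ y => πbar τ y + if τ = σ then q y else 0) ?_ ?_ σ x
      · simpa using h
      · intro τ
        by_cases h : τ = σ <;> simp [h, Finset.sum_add_distrib, hπbar1, hq0]
      · have hterm : ∀ τ : Θ, ∑ y, ((πbar τ y + if τ = σ then q y else 0) - πbar τ y) ^ 2
            = if τ = σ then ∑ y, q y ^ 2 else 0 := by
          intro τ; by_cases h : τ = σ <;> simp [h]
        rw [Finset.sum_congr rfl fun τ _ => hterm τ,
          Finset.sum_ite_eq' Finset.univ σ (fun _ => ∑ y, q y ^ 2)]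
        simpa using hqn
    -- the main neighbourhood claim
    have main : ∀ π : Θ → 𝒳 → ℝ, (∀ θ, ∑ x, π θ x = 1) →
        Real.sqrt (∑ θ, ∑ x, (π θ x - πh θ x) ^ 2) ≤ δ →
          (∀ θ x, 0 ≤ π θ x) ∧
            ∀ θ θ' : Θ, θ ≠ θ' → ∑ x, v θ x * π θ' x ≤ ∑ x, v θ x * π θ x := by
      intro π hrow hdist
      have hrowdist : ∀ θ, Real.sqrt (∑ x, (π θ x - πh θ x) ^ 2) ≤ δ := by
        intro θ
        refine le_trans (Real.sqrt_le_sqrt ?_) hdist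
        exact Finset.single_le_sum (f := fun τ => ∑ x, (π τ x - πh τ x) ^ 2)
          (fun τ _ => Finset.sum_nonneg fun x _ => sq_nonneg _) (Finset.mem_univ θ)
      constructor
      · -- nonnegativity
        intro θ x
        set q : 𝒳 → ℝ := fun y => π θ y - m y with hq
        have hq0 : ∑ y, q y = 0 := by
          simp only [hq]; rw [Finset.sum_sub_distrib, hrow, hmsum]; ring
        have hqn : Real.sqrt (∑ y, q y ^ 2) ≤ ε := by
          have hdecomp : ∀ y, q y = ε / 2 * vbar θ y + (π θ y - πh θ y) := by
            intro y; simp only [hq, hπh]; ring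
          have h1 : Real.sqrt (∑ y, (ε / 2 * vbar θ y) ^ 2) = ε / 2 := by
            have h2 : ∑ y, (ε / 2 * vbar θ y) ^ 2 = (ε / 2) ^ 2 := by
              have : ∀ y, (ε / 2 * vbar θ y) ^ 2 = (ε / 2) ^ 2 * (vbar θ y) ^ 2 :=
                fun y => by ring
              rw [Finset.sum_congr rfl fun y _ => this y, ← Finset.mul_sum, hvbarnorm,
                mul_one]
            rw [h2, Real.sqrt_sq (by linarith)]
          calc Real.sqrt (∑ y, q y ^ 2)
              = Real.sqrt (∑ y, (ε / 2 * vbar θ y + (π θ y - πh θ y)) ^ 2) := by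
                rw [Finset.sum_congr rfl fun y _ => by rw [hdecomp y]]
            _ ≤ Real.sqrt (∑ y, (ε / 2 * vbar θ y) ^ 2) +
                Real.sqrt (∑ y, (π θ y - πh θ y) ^ 2) := mink_sqrt _ _
            _ ≤ ε / 2 + δ := by
                rw [h1]; exact add_le_add le_rfl (hrowdist θ)
            _ ≤ ε := by linarith
        have hA := lemA q hq0 hqn
        have hsumpos : 0 ≤ ∑ σ : Θ, (πbar σ x + q x) :=
          Finset.sum_nonneg fun σ _ => hA σ x
        have heq : ∑ σ : Θ, (πbar σ x + q x) = (Fintype.card Θ : ℝ) * π θ x := by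
          rw [Finset.sum_add_distrib, Finset.sum_const, Finset.card_univ, nsmul_eq_mul]
          have hπx : π θ x = m x + q x := by simp [hq]
          rw [hπx]
          simp only [hm]
          field_simp
        rw [heq] at hsumpos
        nlinarith
      · -- incentive compatibility
        intro θ θ' hne
        have bound : ∀ σ : Θ, (∑ x, v θ x * (π σ x - πh σ x)) ≤ M * δ ∧
            -(M * δ) ≤ ∑ x, v θ x * (π σ x - πh σ x) := by
          intro σ
          have hub : Real.sqrt (∑ x, (v θ x) ^ 2) *
              Real.sqrt (∑ x, (π σ x - πh σ x) ^ 2) ≤ M * δ :=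
            mul_le_mul (hMle θ) (hrowdist σ) (Real.sqrt_nonneg _) hM0
          refine ⟨le_trans (cs_sqrt _ _) hub, ?_⟩
          have h2 := cs_sqrt (fun x => v θ x) (fun x => -(π σ x - πh σ x))
          have h3 : ∑ x, v θ x * -(π σ x - πh σ x) =
              -∑ x, v θ x * (π σ x - πh σ x) := by
            rw [← Finset.sum_neg_distrib]
            exact Finset.sum_congr rfl fun x _ => by ring
          have h4 : ∑ x, (-(π σ x - πh σ x)) ^ 2 = ∑ x, (π σ x - πh σ x) ^ 2 := by
            exact Finset.sum_congr rfl fun x _ => by ring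
          rw [h3, h4] at h2
          linarith
        have hπhv : ∀ σ : Θ, ∑ x, v θ x * πh σ x =
            (∑ x, v θ x * m x) + ε / 2 * (N θ * ip θ σ) := by
          intro σ
          simp only [hπh]
          have hterm : ∀ x, v θ x * (m x + ε / 2 * vbar σ x) =
              v θ x * m x + ε / 2 * (v θ x * vbar σ x) := fun x => by ring
          rw [Finset.sum_congr rfl fun x _ => hterm x, Finset.sum_add_distrib,
            ← Finset.mul_sum, hvv θ σ]
        have hipself : ip θ θ = 1 := by
          have : ∀ x, vbar θ x * vbar θ x = (vbar θ x) ^ 2 := fun x => by ring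
          rw [hip]
          show ∑ x, vbar θ x * vbar θ x = 1
          rw [Finset.sum_congr rfl fun x _ => this x]
          exact hvbarnorm θ
        have hgap : ∑ x, v θ x * πh θ' x + γ ≤ ∑ x, v θ x * πh θ x := by
          rw [hπhv θ, hπhv θ', hipself]
          have h5 := hγle θ θ' hne
          nlinarith
        have hdec : ∀ σ : Θ, ∑ x, v θ x * π σ x =
            ∑ x, v θ x * πh σ x + ∑ x, v θ x * (π σ x - πh σ x) := by
          intro σ
          rw [← Finset.sum_add_distrib]
          exact Finset.sum_congr rfl fun x _ => by ring
        have hMδ : 2 * (M * δ) ≤ γ := by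
          have h6 := (le_div_iff₀ (by linarith : (0:ℝ) < 2 * (M + 1))).1 hδγ
          nlinarith
        have b1 := bound θ
        have b2 := bound θ'
        rw [hdec θ, hdec θ']
        linarith [b1.2, b2.1]
    refine ⟨πh, δ, hδpos, ?_, hπhsum, ?_, main⟩
    · have h0 : Real.sqrt (∑ θ, ∑ x, (πh θ x - πh θ x) ^ 2) ≤ δ := by
        simp [hδpos.le]
      exact (main πh hπhsum h0).1
    · have h0 : Real.sqrt (∑ θ, ∑ x, (πh θ x - πh θ x) ^ 2) ≤ δ := by
        simp [hδpos.le]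
      exact (main πh hπhsum h0).2

  · -- Part (ii)
    congr 1
    ext s
    constructor
    · rintro ⟨π, hnn, hsum, hIC, hs⟩
      refine ⟨π, id, hnn, hsum, fun θ θ'' => ?_, hs⟩
      by_cases h : θ'' = θ
      · subst h; exact le_refl _
      · exact hIC θ θ'' (Ne.symm h)
    · rintro ⟨π, r, hnn, hsum, hbr, hs⟩
      exact ⟨fun θ => π (r θ), fun θ x => hnn (r θ) x, fun θ => hsum (r θ),
        fun θ θ' _ => hbr θ (r θ'), hs⟩
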